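/- Suppose h is supermodular, i.e., g_α is a supermodular set function for every α ∈ B. Then for every α ∈ B, every S ⊆ N, and every (x,y,t) ∈ H, both of the following linear inequalities hold: (1) α·y + g_α(S) + Σ_{i ∈ N\S} ρ_α(i,S) x_i − Σ_{i ∈ S} ρ_α(i, N\{i})(1 − x_i) ≤ t, and (2) α·y + g_α(S) + Σ_{i ∈ N\S} ρ_α(i,∅) x_i − Σ_{i ∈ S} ρ_α(i, S\{i})(1 − x_i) ≤ t. -/

import Mathlib

open Finset

noncomputable section

variable {ι : Type*}

/-- Indicator vector of a subset `S ⊆ N`. -/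
def indVec [DecidableEq ι] (S : Finset ι) : ι → ℝ := fun i => if i ∈ S then 1 else 0

/-- `g_α(x) = inf_{y ∈ ℝ^N} (−α·y + h(x,y))`, with values in `ℝ ∪ {±∞}`. -/
def gA [Fintype ι] (h : (ι → ℝ) → (ι → ℝ) → EReal) (α x : ι → ℝ) : EReal :=
  ⨅ y : ι → ℝ, (((-(∑ i, α i * y i) : ℝ) : EReal) + h x y)

/-- `B = {α : g_α(x) is finite for every binary x}`. -/
def BSet [Fintype ι] [DecidableEq ι] (h : (ι → ℝ) → (ι → ℝ) → EReal) : Set (ι → ℝ) :=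
  {α | ∀ S : Finset ι, gA h α (indVec S) ≠ ⊤ ∧ gA h α (indVec S) ≠ ⊥}

/-- The (real-valued) set function `g_α`, identifying subsets with indicator vectors. -/
def gR [Fintype ι] [DecidableEq ι] (h : (ι → ℝ) → (ι → ℝ) → EReal)
    (α : ι → ℝ) (S : Finset ι) : ℝ := (gA h α (indVec S)).toReal

/-- Increment function `ρ_α(i,S) = g_α(S ∪ {i}) − g_α(S)`. -/
def rho [Fintype ι] [DecidableEq ι] (h : (ι → ℝ) → (ι → ℝ) → EReal)
    (α : ι → ℝ) (i : ι) (S : Finset ι) : ℝ := gR h α (insert i S) - gR h α S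

/-- The mixed 0-1 epigraph `H = {(x,y,t) : x binary, h(x,y) ≤ t}`. -/
def HSet [Fintype ι] (h : (ι → ℝ) → (ι → ℝ) → EReal) :
    Set ((ι → ℝ) × (ι → ℝ) × ℝ) :=
  {p | (∀ i, p.1 i = 0 ∨ p.1 i = 1) ∧ h p.1 p.2.1 ≤ ((p.2.2 : ℝ) : EReal)}

/-- Lower telescoping bound: for a supermodular `g` and `D` disjoint from `A`,
`∑_{i∈D} ρ(i,A) ≤ g(A ∪ D) − g(A)`. -/
lemma lowerTel [DecidableEq ι] (g : Finset ι → ℝ)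
    (sup : ∀ (i : ι) (S T : Finset ι), S ⊆ T → i ∉ T →
      g (insert i S) - g S ≤ g (insert i T) - g T)
    (A : Finset ι) :
    ∀ D : Finset ι, Disjoint A D →
      ∑ i ∈ D, (g (insert i A) - g A) ≤ g (A ∪ D) - g A := by
  intro D
  induction D using Finset.induction_on with
  | empty => simp
  | @insert j D' hj ih =>
    intro hdisj
    have hjA : j ∉ A := by
      intro hja
      exact (Finset.disjoint_left.mp hdisj hja) (Finset.mem_insert_self _ _)
    have hdisj' : Disjoint A D' := hdisj.mono_right (Finset.subset_insert _ _)
    rw [Finset.sum_insert hj]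
    have h1 := ih hdisj'
    have hjAD : j ∉ A ∪ D' := by simp [hjA, hj]
    have h2 := sup j A (A ∪ D') Finset.subset_union_left hjAD
    rw [Finset.union_insert]
    linarith

/-- Upper telescoping bound: for a supermodular `g` and `D ⊆ E`,
`g(E) − g(E \ D) ≤ ∑_{i∈D} ρ(i, E\{i})`. -/
lemma upperTel [DecidableEq ι] (g : Finset ι → ℝ)
    (sup : ∀ (i : ι) (S T : Finset ι), S ⊆ T → i ∉ T →
      g (insert i S) - g S ≤ g (insert i T) - g T)
    (E : Finset ι) :
    ∀ D : Finset ι, D ⊆ E →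
      g E - g (E \ D) ≤ ∑ i ∈ D, (g (insert i (E \ {i})) - g (E \ {i})) := by
  intro D
  induction D using Finset.induction_on with
  | empty => simp
  | @insert j D' hj ih =>
    intro hDE
    have hjE : j ∈ E := hDE (Finset.mem_insert_self _ _)
    have hD'E : D' ⊆ E := (Finset.subset_insert _ _).trans hDE
    rw [Finset.sum_insert hj]
    have h1 := ih hD'E
    have hkey : E \ insert j D' = (E \ D') \ {j} := by
      ext a; simp; tauto
    have hins : insert j ((E \ D') \ {j}) = E \ D' := by
      ext a; by_cases hab : a = j <;> simp [hab, hjE, hj]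
    have h2 := sup j ((E \ D') \ {j}) (E \ {j})
      (by intro a ha; simp at ha ⊢; tauto) (by simp)
    rw [hins] at h2
    rw [hkey]
    linarith

/-- If `h` is supermodular (i.e. `g_α` is supermodular for every `α ∈ B`),
then for every `α ∈ B`, `S ⊆ N` and `(x,y,t) ∈ H` the two linear supermodular
inequalities hold. -/
theorem stmt_1 [Fintype ι] [DecidableEq ι] (h : (ι → ℝ) → (ι → ℝ) → EReal)
    (hne : ∀ x y, h x y ≠ ⊥)
    (hsup : ∀ α ∈ BSet h, ∀ (i : ι) (S T : Finset ι), S ⊆ T → i ∉ T →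
      gR h α (insert i S) - gR h α S ≤ gR h α (insert i T) - gR h α T)
    (α : ι → ℝ) (hα : α ∈ BSet h) (S : Finset ι)
    (x y : ι → ℝ) (t : ℝ) (hmem : (x, y, t) ∈ HSet h) :
    ((∑ i, α i * y i) + gR h α S + (∑ i ∈ Finset.univ \ S, rho h α i S * x i)
        - ∑ i ∈ S, rho h α i (Finset.univ \ {i}) * (1 - x i) ≤ t)
    ∧ ((∑ i, α i * y i) + gR h α S + (∑ i ∈ Finset.univ \ S, rho h α i ∅ * x i)
        - ∑ i ∈ S, rho h α i (S \ {i}) * (1 - x i) ≤ t) := by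
  obtain ⟨hbin0, hle0⟩ := hmem
  have hbin : ∀ i, x i = 0 ∨ x i = 1 := hbin0
  have hle : h x y ≤ ((t : ℝ) : EReal) := hle0
  set g : Finset ι → ℝ := gR h α with hg
  have sup := hsup α hα
  set T : Finset ι := Finset.univ.filter (fun i => x i = 1) with hT
  have hmemT : ∀ i, i ∈ T ↔ x i = 1 := by
    intro i; simp [hT]
  -- x is the indicator of T
  have hx : x = indVec T := by
    funext i
    rcases hbin i with h0 | h1
    · have : i ∉ T := by simp [hmemT, h0]
      simp [indVec, this, h0]
    · have : i ∈ T := by simp [hmemT, h1]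
      simp [indVec, this, h1]
  -- key analytic step: α·y + g(T) ≤ t
  have hxy : (∑ i, α i * y i) + g T ≤ t := by
    have h1 : gA h α x ≤ ((-(∑ i, α i * y i) : ℝ) : EReal) + h x y := iInf_le _ y
    have h2 : gA h α x ≤ (((-(∑ i, α i * y i) + t : ℝ)) : EReal) := by
      rw [EReal.coe_add]
      exact h1.trans (add_le_add_right hle _)
    have hfin := hα T
    rw [hx] at h2
    have h3 := EReal.toReal_le_toReal h2 hfin.2 (EReal.coe_ne_top _)
    rw [EReal.toReal_coe] at h3
    have : g T ≤ -(∑ i, α i * y i) + t := h3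
    linarith
  -- rewriting the x-weighted sums as set sums
  have hsum1 : ∀ (c : ι → ℝ) (U : Finset ι),
      ∑ i ∈ U, c i * x i = ∑ i ∈ U.filter (fun i => x i = 1), c i := by
    intro c U
    rw [Finset.sum_filter]
    refine Finset.sum_congr rfl fun i _ => ?_
    rcases hbin i with h0 | h1
    · simp [h0]
    · simp [h1]
  have hsum2 : ∀ (c : ι → ℝ) (U : Finset ι),
      ∑ i ∈ U, c i * (1 - x i) = ∑ i ∈ U.filter (fun i => x i = 0), c i := by
    intro c U
    rw [Finset.sum_filter]
    refine Finset.sum_congr rfl fun i _ => ?_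
    rcases hbin i with h0 | h1
    · simp [h0]
    · simp [h1]
  have hf1 : (Finset.univ \ S).filter (fun i => x i = 1) = T \ S := by
    ext i; simp [hmemT]; tauto
  have hf2 : S.filter (fun i => x i = 0) = S \ T := by
    ext i
    simp only [Finset.mem_filter, Finset.mem_sdiff, hmemT]
    constructor
    · rintro ⟨hi, h0⟩; exact ⟨hi, by rw [h0]; norm_num⟩
    · rintro ⟨hi, h1⟩
      rcases hbin i with h0 | h0
      · exact ⟨hi, h0⟩
      · exact absurd h0 h1
  -- the two combinatorial inequalities
  have hrho : ∀ i U, rho h α i U = g (insert i U) - g U := fun i U => rfl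
  constructor
  · -- statement (1)
    have hA : ∑ i ∈ T \ S, rho h α i S ≤ g (S ∪ T) - g S := by
      have := lowerTel g sup S (T \ S) Finset.disjoint_sdiff
      rwa [Finset.union_sdiff_self_eq_union] at this
    have hB : g (S ∪ T) - g T ≤ ∑ i ∈ S \ T, rho h α i (Finset.univ \ {i}) := by
      have h1 := upperTel g sup (S ∪ T) (S \ T)
        (Finset.sdiff_subset.trans Finset.subset_union_left)
      have he : (S ∪ T) \ (S \ T) = T := by ext a; simp; tauto
      rw [he] at h1
      refine h1.trans (Finset.sum_le_sum fun i hi => ?_)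
      rw [hrho]
      exact sup i ((S ∪ T) \ {i}) (Finset.univ \ {i})
        (Finset.sdiff_subset_sdiff (Finset.subset_univ _) (le_refl _)) (by simp)
    rw [hsum1, hsum2, hf1, hf2]
    linarith
  · -- statement (2)
    have hA : g S - g (S ∩ T) ≤ ∑ i ∈ S \ T, rho h α i (S \ {i}) := by
      have h1 := upperTel g sup S (S \ T) Finset.sdiff_subset
      rwa [Finset.sdiff_sdiff_self_left] at h1
    have hB : ∑ i ∈ T \ S, rho h α i ∅ ≤ g T - g (S ∩ T) := by
      have h1 := lowerTel g sup (S ∩ T) (T \ S)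
        (Finset.disjoint_sdiff.mono_left Finset.inter_subset_left)
      have he : (S ∩ T) ∪ (T \ S) = T := by ext a; simp; tauto
      rw [he] at h1
      refine le_trans (Finset.sum_le_sum fun i hi => ?_) h1
      rw [hrho]
      refine sup i ∅ (S ∩ T) (Finset.empty_subset _) ?_
      simp only [Finset.mem_sdiff] at hi
      simp [hi.2]
    rw [hsum1, hsum2, hf1, hf2]
    linarith

end
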